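/- Let C be a symmetric monoidal category. In Fam(C) with the fiberwise symmetric monoidal structure, let Bool := I ⨿ I, where I = (PUnit, fun _ => 𝟙_C) is the tensor unit and ⨿ is the binary coproduct, with coproduct injections ttrue, ffalse : I ⟶ Bool. Then for every pair of morphisms f, g : A ⟶ B in Fam(C) there exists a unique morphism h : Bool ⊗ A ⟶ B such that h ∘ (ttrue ⊗ id_A) ∘ (λ_A)⁻¹ = f and h ∘ (ffalse ⊗ id_A) ∘ (λ_A)⁻¹ = g, where λ_A : I ⊗ A ≅ A is the left unitor. -/

import Mathlib

open CategoryTheory CategoryTheory.Limits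

universe w v u

/-- The category `Fam(C)` of families of objects of `C`: an object is a pair
`(X, A)` of a (index) type `X` and a family `A : X → C` of objects of `C`. -/
structure Fam (C : Type u) [CategoryTheory.Category.{v} C] : Type (max (w + 1) u) where
  /-- the index type -/
  idx : Type w
  /-- the family of fibers -/
  fib : idx → C

namespace Fam

variable {C : Type u} [CategoryTheory.Category.{v} C]

/-- A morphism `(X, A) ⟶ (Y, B)` in `Fam(C)` is a pair of a function
`f₀ : X → Y` together with morphisms `f x : A x ⟶ B (f₀ x)` of `C`. -/
instance : CategoryTheory.Category.{max w v} (Fam.{w} C) where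
  Hom A B := Σ f₀ : A.idx → B.idx, ∀ x, A.fib x ⟶ B.fib (f₀ x)
  id A := ⟨fun x => x, fun x => 𝟙 (A.fib x)⟩
  comp f g := ⟨fun x => g.1 (f.1 x), fun x => f.2 x ≫ g.2 (f.1 x)⟩
  id_comp f := congrArg (Sigma.mk f.1) (funext fun x => CategoryTheory.Category.id_comp (f.2 x))
  comp_id f := congrArg (Sigma.mk f.1) (funext fun x => CategoryTheory.Category.comp_id (f.2 x))
  assoc _ _ _ := congrArg (Sigma.mk _) (funext fun _ => CategoryTheory.Category.assoc _ _ _)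

end Fam

namespace Fam

open MonoidalCategory

variable {C : Type u} [Category.{v} C] [MonoidalCategory C]

/-- The fiberwise tensor product on `Fam(C)`:
`(X, A) ⊗ (Y, B) := (X × Y, fun (x, y) => A x ⊗ B y)`. -/
def tensorObj' (A B : Fam.{w} C) : Fam.{w} C :=
  ⟨A.idx × B.idx, fun p => A.fib p.1 ⊗ B.fib p.2⟩

/-- The fiberwise tensor product of morphisms of `Fam(C)`. -/
def tensorHom' {A A' B B' : Fam.{w} C} (f : A ⟶ A') (g : B ⟶ B') :
    tensorObj' A B ⟶ tensorObj' A' B' :=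
  ⟨fun p => (f.1 p.1, g.1 p.2), fun p => f.2 p.1 ⊗ₘ g.2 p.2⟩

/-- The tensor unit of `Fam(C)`: `(PUnit, fun _ => 𝟙_C)`. -/
def unitObj : Fam.{w} C := ⟨PUnit, fun _ => 𝟙_ C⟩

/-- The associator of `Fam(C)`: the evident bijection of product types on
indices, and the associator of `C` on fibers. -/
def assocHom (A B D : Fam.{w} C) :
    tensorObj' (tensorObj' A B) D ⟶ tensorObj' A (tensorObj' B D) :=
  ⟨fun p => (p.1.1, (p.1.2, p.2)), fun _ => (α_ _ _ _).hom⟩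

/-- The left unitor of `Fam(C)`: the evident bijection on indices, and the
left unitor of `C` on fibers. -/
def leftUnitorHom (A : Fam.{w} C) : tensorObj' unitObj A ⟶ A :=
  ⟨fun p => p.2, fun _ => (λ_ _).hom⟩

/-- The right unitor of `Fam(C)`: the evident bijection on indices, and the
right unitor of `C` on fibers. -/
def rightUnitorHom (A : Fam.{w} C) : tensorObj' A unitObj ⟶ A :=
  ⟨fun p => p.1, fun _ => (ρ_ _).hom⟩

/-- The braiding of `Fam(C)`: the swap bijection of product types on indices,
and the braiding of `C` on fibers. -/
def braidHom [SymmetricCategory C] (A B : Fam.{w} C) :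
    tensorObj' A B ⟶ tensorObj' B A :=
  ⟨fun p => (p.2, p.1), fun _ => (β_ _ _).hom⟩

end Fam

namespace Fam

open MonoidalCategory

variable (C : Type u) [Category.{v} C] [MonoidalCategory C]

/-- The object `Bool := I ⨿ I` of `Fam(C)`: the binary coproduct of two
copies of the tensor unit `I = (PUnit, fun _ => 𝟙_C)`. -/
def boolObj : Fam.{w} C := ⟨PUnit.{w + 1} ⊕ PUnit.{w + 1}, fun _ => 𝟙_ C⟩

/-- The first coproduct injection `ttrue : I ⟶ Bool`. -/
def ttrue : (unitObj : Fam.{w} C) ⟶ boolObj C :=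
  ⟨fun x => Sum.inl x, fun _ => 𝟙 (𝟙_ C)⟩

/-- The second coproduct injection `ffalse : I ⟶ Bool`. -/
def ffalse : (unitObj : Fam.{w} C) ⟶ boolObj C :=
  ⟨fun x => Sum.inr x, fun _ => 𝟙 (𝟙_ C)⟩

variable {C}

/-- The inverse of the left unitor `λ_A : I ⊗ A ≅ A` of `Fam(C)`. -/
def leftUnitorInv (A : Fam.{w} C) : A ⟶ tensorObj' unitObj A :=
  ⟨fun x => (PUnit.unit, x), fun _ => (λ_ _).inv⟩

end Fam


namespace Fam

theorem comp_fst {C : Type u} [Category.{v} C] {A B D : Fam.{w} C} (f : A ⟶ B) (g : B ⟶ D)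
    (x : A.idx) : (f ≫ g).1 x = g.1 (f.1 x) := rfl

theorem comp_snd {C : Type u} [Category.{v} C] {A B D : Fam.{w} C} (f : A ⟶ B) (g : B ⟶ D)
    (x : A.idx) : (f ≫ g).2 x = f.2 x ≫ g.2 (f.1 x) := rfl

theorem id_snd {C : Type u} [Category.{v} C] {A : Fam.{w} C} (x : A.idx) :
    (𝟙 A : A ⟶ A).2 x = 𝟙 (A.fib x) := rfl

theorem hom_ext' {C : Type u} [Category.{v} C] {A B : Fam.{w} C} {f g : A ⟶ B}
    (h1 : f.1 = g.1)
    (h2 : ∀ x, f.2 x = g.2 x ≫ CategoryTheory.eqToHom (congrArg (fun t => B.fib (t x)) h1).symm) :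
    f = g := by
  obtain ⟨f1, f2⟩ := f
  obtain ⟨g1, g2⟩ := g
  obtain rfl : f1 = g1 := h1
  simp only [eqToHom_refl, Category.comp_id] at h2
  exact congrArg _ (funext h2)

end Fam

/-- Let `C` be a symmetric monoidal category. In `Fam(C)`, `ttrue` and
`ffalse` exhibit `Bool` as the coproduct `I ⨿ I`, and for every pair of
morphisms `f, g : A ⟶ B` there is a unique morphism `h : Bool ⊗ A ⟶ B` with
`h ∘ (ttrue ⊗ id_A) ∘ (λ_A)⁻¹ = f` and `h ∘ (ffalse ⊗ id_A) ∘ (λ_A)⁻¹ = g`. -/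
theorem fam_bool_if_then_else (C : Type u) [Category.{v} C] [MonoidalCategory C]
    [SymmetricCategory C] :
    Nonempty (IsColimit (BinaryCofan.mk (Fam.ttrue.{w} C) (Fam.ffalse.{w} C))) ∧
    ∀ (A B : Fam.{w} C) (f g : A ⟶ B),
      ∃! h : Fam.tensorObj' (Fam.boolObj C) A ⟶ B,
        Fam.leftUnitorInv A ≫ Fam.tensorHom' (Fam.ttrue C) (𝟙 A) ≫ h = f ∧
        Fam.leftUnitorInv A ≫ Fam.tensorHom' (Fam.ffalse C) (𝟙 A) ≫ h = g := by
  constructor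
  · refine ⟨BinaryCofan.IsColimit.mk _ (fun {T} p q =>
      ⟨fun b => Sum.elim (fun u => p.1 u) (fun u => q.1 u) b,
       fun b => match b with
        | Sum.inl u => p.2 u
        | Sum.inr u => q.2 u⟩) ?_ ?_ ?_⟩
    · intro T p q
      refine Fam.hom_ext' rfl (fun x => ?_)
      simp only [eqToHom_refl, Category.comp_id, Fam.comp_snd]
      refine Eq.trans ?_ (Category.comp_id _).symm
      exact Category.id_comp _
    · intro T p q
      refine Fam.hom_ext' rfl (fun x => ?_)
      simp only [eqToHom_refl, Category.comp_id, Fam.comp_snd]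
      refine Eq.trans ?_ (Category.comp_id _).symm
      exact Category.id_comp _
    · intro T p q m hp hq
      subst hp
      subst hq
      refine Fam.hom_ext' (funext fun b => ?_) (fun b => ?_)
      · rcases b with ⟨u⟩ | ⟨u⟩ <;> rfl
      · rcases b with ⟨u⟩ | ⟨u⟩ <;>
        · simp only [eqToHom_refl, Category.comp_id, Fam.comp_snd]
          refine Eq.trans ?_ (Category.comp_id _).symm
          exact (Category.id_comp _).symm
  · intro A B f g
    refine ⟨⟨fun p => Sum.elim (fun _ => f.1 p.2) (fun _ => g.1 p.2) p.1,
      fun p => match p with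
        | (Sum.inl u, x) => (MonoidalCategory.leftUnitor (A.fib x)).hom ≫ f.2 x
        | (Sum.inr u, x) => (MonoidalCategory.leftUnitor (A.fib x)).hom ≫ g.2 x⟩, ⟨?_, ?_⟩, ?_⟩
    · refine Fam.hom_ext' rfl (fun x => ?_)
      simp only [eqToHom_refl, Category.comp_id, Fam.comp_snd]
      refine Eq.trans ?_ (Category.comp_id _).symm
      show (MonoidalCategory.leftUnitor _).inv ≫ (MonoidalCategory.tensorHom (𝟙 _) (𝟙 _)) ≫ (MonoidalCategory.leftUnitor _).hom ≫ f.2 x = f.2 x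
      simp
    · refine Fam.hom_ext' rfl (fun x => ?_)
      simp only [eqToHom_refl, Category.comp_id, Fam.comp_snd]
      refine Eq.trans ?_ (Category.comp_id _).symm
      show (MonoidalCategory.leftUnitor _).inv ≫ (MonoidalCategory.tensorHom (𝟙 _) (𝟙 _)) ≫ (MonoidalCategory.leftUnitor _).hom ≫ g.2 x = g.2 x
      simp
    · rintro m ⟨hf, hg⟩
      subst hf
      subst hg
      refine Fam.hom_ext' (funext fun p => ?_) (fun p => ?_)
      · rcases p with ⟨⟨u⟩ | ⟨u⟩, x⟩ <;> rfl
      · rcases p with ⟨⟨u⟩ | ⟨u⟩, x⟩ <;>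
        · simp only [eqToHom_refl, Category.comp_id, Fam.comp_snd]
          refine Eq.trans ?_ (Category.comp_id _).symm
          show _ = (MonoidalCategory.leftUnitor _).hom ≫ (MonoidalCategory.leftUnitor _).inv ≫ (MonoidalCategory.tensorHom (𝟙 _) (𝟙 _)) ≫ m.2 _
          simp
          exact (Category.id_comp _).symm
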